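/- (Lemma 3.9.) Let A ∈ ℂ^{n×n} be invertible and let ℓ be an integer with 0 ≤ ℓ ≤ ⌊n/2⌋. Fix parameters μ_1, …, μ_ℓ ∈ ℂ with |μ_i| > 1 and α_1, …, α_{n−2ℓ} ∈ ℂ with |α_j| = 1, and suppose A belongs to the closure of the set { P (H_2(μ̃_1) ⊕ ⋯ ⊕ H_2(μ̃_ℓ) ⊕ diag(α̃_1, …, α̃_{n−2ℓ})) Pᴴ : P invertible, |μ̃_i| > 1 for all i, |α̃_j| = 1 for all j, μ̃_i ≠ μ̃_{i'} ⟺ μ_i ≠ μ_{i'} for all i, i', and α̃_j² ≠ α̃_{j'}² ⟺ α_j² ≠ α_{j'}² for all j, j' } (this is the *congruence bundle ℬ*(⊕_{i=1}^ℓ H_2(μ_i) ⊕ ⊕_{j=1}^{n−2ℓ} α_j)). Then the polynomial p_A(λ) = det(A + λ Aᴴ) ∈ ℂ[λ] has at least n − 2ℓ roots of modulus 1, counted with multiplicity. -/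

import Mathlib

open Matrix Polynomial Filter

noncomputable section

/-- The `k × k` Jordan block `J_k(μ)` (eigenvalue `μ` on the diagonal, `1` on the
superdiagonal). -/
def Jblock (k : ℕ) (μ : ℂ) : Matrix (Fin k) (Fin k) ℂ :=
  Matrix.of fun i j =>
    if (j : ℕ) = (i : ℕ) then μ else if (j : ℕ) = (i : ℕ) + 1 then 1 else 0

/-- The `k × k` matrix `Γ_k`: in 1-based indexing, the `(i,j)` entry is `(-1)^(k-i)`
when `j = k+1-i` or `j = k+2-i`, and `0` otherwise. -/
def Gamma (k : ℕ) : Matrix (Fin k) (Fin k) ℂ :=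
  Matrix.of fun i j =>
    if (i : ℕ) + (j : ℕ) = k - 1 ∨ (i : ℕ) + (j : ℕ) = k then
      (-1 : ℂ) ^ (k - 1 - (i : ℕ)) else 0

/-- Block-diagonal direct sum of two square complex matrices. -/
def dsum {m n : ℕ} (A : Matrix (Fin m) (Fin m) ℂ) (B : Matrix (Fin n) (Fin n) ℂ) :
    Matrix (Fin (m + n)) (Fin (m + n)) ℂ :=
  Matrix.reindex finSumFinEquiv finSumFinEquiv (Matrix.fromBlocks A 0 0 B)

/-- The `2k × 2k` matrix `H_{2k}(μ) = [[0, I_k], [J_k(μ), 0]]`. -/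
def Hblock (k : ℕ) (μ : ℂ) : Matrix (Fin (k + k)) (Fin (k + k)) ℂ :=
  Matrix.reindex finSumFinEquiv finSumFinEquiv (Matrix.fromBlocks 0 1 (Jblock k μ) 0)

/-- The total size of a family of sizes `p : Fin q → ℕ`. -/
def finSize : {q : ℕ} → (Fin q → ℕ) → ℕ
  | 0, _ => 0
  | _ + 1, p => p 0 + finSize fun i => p i.succ

/-- Block-diagonal direct sum of a family of square complex matrices of sizes
`p 0, …, p (q-1)`. -/
def finDsum : {q : ℕ} → (p : Fin q → ℕ) →
    ((i : Fin q) → Matrix (Fin (p i)) (Fin (p i)) ℂ) →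
    Matrix (Fin (finSize p)) (Fin (finSize p)) ℂ
  | 0, _, _ => 0
  | _ + 1, p, M => dsum (M 0) (finDsum (fun i => p i.succ) fun i => M i.succ)

/-- The `2 × 2` block `H_2(μ) = [[0, 1], [μ, 0]]`. -/
def H2 (μ : ℂ) : Matrix (Fin 2) (Fin 2) ℂ := !![0, 1; μ, 0]

/-- The block-diagonal direct sum `H_2(μ_1) ⊕ ⋯ ⊕ H_2(μ_r)`. -/
def pairH (r : ℕ) (mu : Fin r → ℂ) :
    Matrix (Fin (finSize fun _ : Fin r => 2)) (Fin (finSize fun _ : Fin r => 2)) ℂ :=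
  finDsum (fun _ => 2) fun i => H2 (mu i)

/-- The pencil `A + λ Aᴴ`, regarded as a single matrix over `ℂ[λ]`. -/
def starPencil {n : ℕ} (A : Matrix (Fin n) (Fin n) ℂ) :
    Matrix (Fin n) (Fin n) (Polynomial ℂ) :=
  A.map Polynomial.C + (Polynomial.X : Polynomial ℂ) • Aᴴ.map Polynomial.C

-- L1: coefficient convergence from eval convergence
lemma coeff_tendsto_of_eval_tendsto {q : ℕ → Polynomial ℂ} {p : Polynomial ℂ} {n : ℕ}
    (hq : ∀ k, (q k).natDegree ≤ n) (hp : p.natDegree ≤ n)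
    (hev : ∀ z : ℂ, Tendsto (fun k => (q k).eval z) atTop (nhds (p.eval z))) (m : ℕ) :
    Tendsto (fun k => (q k).coeff m) atTop (nhds (p.coeff m)) := by
  classical
  set s : Finset ℕ := Finset.range (n + 1) with hs
  have hinj : Set.InjOn (fun i : ℕ => (i : ℂ)) s := fun a _ b _ h => Nat.cast_injective h
  have key : ∀ r : Polynomial ℂ, r.natDegree ≤ n →
      r.coeff m = ∑ i ∈ s, r.eval (i : ℂ) * (Lagrange.basis s (fun i : ℕ => (i : ℂ)) i).coeff m := by
    intro r hr
    have hdeg : r.degree < (s.card : ℕ) := by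
      rw [hs, Finset.card_range]
      exact lt_of_le_of_lt (Polynomial.natDegree_le_iff_degree_le.mp hr)
        (by exact_mod_cast Nat.lt_succ_self n)
    conv_lhs => rw [Lagrange.eq_interpolate hinj hdeg]
    simp [Lagrange.interpolate, Polynomial.finset_sum_coeff, Polynomial.coeff_C_mul]
  have hkey := key p hp
  rw [hkey]
  have : ∀ k, (q k).coeff m = ∑ i ∈ s, (q k).eval (i : ℂ) * (Lagrange.basis s (fun i : ℕ => (i : ℂ)) i).coeff m :=
    fun k => key (q k) (hq k)
  simp only [this]
  exact tendsto_finset_sum _ fun i _ => (hev i).mul tendsto_const_nhds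

lemma root_bound {p : Polynomial ℂ} {n : ℕ} (hd : p.natDegree ≤ n) (hn : p.coeff n ≠ 0)
    {z : ℂ} (hz : p.eval z = 0) :
    ‖z‖ ≤ max 1 ((∑ m ∈ Finset.range n, ‖p.coeff m‖) / ‖p.coeff n‖) := by
  set S := ∑ m ∈ Finset.range n, ‖p.coeff m‖ with hS
  set a := ‖p.coeff n‖ with ha
  have ha0 : 0 < a := norm_pos_iff.mpr hn
  by_contra hcon
  push_neg at hcon
  have h1 : (1 : ℝ) < ‖z‖ := lt_of_le_of_lt (le_max_left _ _) hcon
  have h2 : S / a < ‖z‖ := lt_of_le_of_lt (le_max_right _ _) hcon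
  rcases Nat.eq_zero_or_pos n with hn0 | hnpos
  · subst hn0
    have : p.natDegree = 0 := le_antisymm hd (Nat.zero_le _)
    rw [Polynomial.eval_eq_sum_range' (lt_of_le_of_lt hd Nat.zero_lt_one)] at hz
    simp at hz
    exact hn hz
  have heval : p.eval z = ∑ i ∈ Finset.range (n + 1), p.coeff i * z ^ i :=
    Polynomial.eval_eq_sum_range' (Nat.lt_succ_of_le hd) z
  rw [Finset.sum_range_succ] at heval
  have hkey : p.coeff n * z ^ n = -∑ i ∈ Finset.range n, p.coeff i * z ^ i := by
    rw [hz] at heval; linear_combination -heval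
  have habs : a * ‖z‖ ^ n ≤ S * ‖z‖ ^ (n - 1) := by
    calc a * ‖z‖ ^ n = ‖p.coeff n * z ^ n‖ := by
          rw [norm_mul, norm_pow]
      _ = ‖∑ i ∈ Finset.range n, p.coeff i * z ^ i‖ := by rw [hkey, norm_neg]
      _ ≤ ∑ i ∈ Finset.range n, ‖p.coeff i * z ^ i‖ :=
          norm_sum_le _ _
      _ ≤ ∑ i ∈ Finset.range n, ‖p.coeff i‖ * ‖z‖ ^ (n - 1) := by
          refine Finset.sum_le_sum fun i hi => ?_
          rw [norm_mul, norm_pow]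
          exact mul_le_mul_of_nonneg_left
            (pow_le_pow_right₀ h1.le (Nat.le_sub_one_of_lt (Finset.mem_range.mp hi)))
            (norm_nonneg _)
      _ = S * ‖z‖ ^ (n - 1) := by rw [← Finset.sum_mul]
  have hzpos : (0:ℝ) < ‖z‖ ^ (n - 1) := pow_pos (lt_trans one_pos h1) _
  have hn' : n = (n - 1) + 1 := (Nat.succ_pred_eq_of_pos hnpos).symm
  have habs2 : (a * ‖z‖) * ‖z‖ ^ (n-1) ≤ S * ‖z‖ ^ (n-1) := by
    have hpow : ‖z‖ ^ n = ‖z‖ ^ (n-1) * ‖z‖ := by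
      conv_lhs => rw [hn', pow_succ]
    calc (a * ‖z‖) * ‖z‖ ^ (n-1) = a * ‖z‖ ^ n := by
          rw [hpow]; ring
      _ ≤ S * ‖z‖ ^ (n-1) := habs
  have : a * ‖z‖ ≤ S := le_of_mul_le_mul_right habs2 hzpos
  have : ‖z‖ ≤ S / a := (le_div_iff₀ ha0).mpr (by linarith [this])
  linarith


def sp {ι : Type*} (A : Matrix ι ι ℂ) : Matrix ι ι (Polynomial ℂ) :=
  A.map Polynomial.C + (Polynomial.X : Polynomial ℂ) • Aᴴ.map Polynomial.C

lemma sp_submatrix {ι κ : Type*} (e : ι → κ) (A : Matrix κ κ ℂ) :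
    sp (A.submatrix e e) = (sp A).submatrix e e := by
  unfold sp
  rw [conjTranspose_submatrix]
  ext i j
  simp [Matrix.submatrix_apply, Matrix.map_apply]

lemma sp_fromBlocks {ι κ : Type*} (M : Matrix ι ι ℂ) (N : Matrix κ κ ℂ) :
    sp (Matrix.fromBlocks M 0 0 N) = Matrix.fromBlocks (sp M) 0 0 (sp N) := by
  unfold sp
  rw [Matrix.fromBlocks_conjTranspose]
  ext i j
  rcases i with i | i <;> rcases j with j | j <;>
    simp [Matrix.fromBlocks, Matrix.map_apply]

lemma sp_congruence {n : ℕ} (P M : Matrix (Fin n) (Fin n) ℂ) :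
    sp (P * M * Pᴴ) = P.map Polynomial.C * sp M * Pᴴ.map Polynomial.C := by
  unfold sp
  have h1 : (P * M * Pᴴ)ᴴ = P * Mᴴ * Pᴴ := by
    rw [conjTranspose_mul, conjTranspose_mul, conjTranspose_conjTranspose, mul_assoc]
  rw [h1]
  have hmap : ∀ (X Y : Matrix (Fin n) (Fin n) ℂ), (X * Y).map (Polynomial.C) =
      X.map Polynomial.C * Y.map Polynomial.C := fun X Y => Matrix.map_mul
  rw [hmap, hmap, hmap, hmap]
  rw [Matrix.mul_add, Matrix.add_mul]
  congr 1
  rw [Matrix.mul_smul, Matrix.smul_mul]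

lemma sp_diagonal {ι : Type*} [Fintype ι] [DecidableEq ι] (a : ι → ℂ) :
    sp (Matrix.diagonal a) = Matrix.diagonal
      (fun j => Polynomial.C (a j) + Polynomial.X * Polynomial.C ((starRingEnd ℂ) (a j))) := by
  unfold sp
  rw [Matrix.diagonal_conjTranspose]
  ext i j
  by_cases h : i = j <;> simp [Matrix.diagonal, h, Matrix.map_apply, Pi.star_apply, RCLike.star_def]

lemma det_sp_dsum {m k : ℕ} (M : Matrix (Fin m) (Fin m) ℂ) (N : Matrix (Fin k) (Fin k) ℂ) :
    (sp (dsum M N)).det = (sp M).det * (sp N).det := by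
  unfold dsum
  rw [Matrix.reindex_apply, sp_submatrix, Matrix.det_submatrix_equiv_self, sp_fromBlocks,
    Matrix.det_fromBlocks_zero₂₁]

lemma det_sp_pairH : ∀ (r : ℕ) (mu : Fin r → ℂ),
    (sp (pairH r mu)).det = ∏ i, (sp (H2 (mu i))).det
  | 0, mu => by
    haveI : IsEmpty (Fin (finSize (fun _ : Fin 0 => 2))) := inferInstanceAs (IsEmpty (Fin 0))
    simp [Matrix.det_isEmpty]
  | r + 1, mu => by
    have h : pairH (r + 1) mu = dsum (H2 (mu 0)) (pairH r (fun i => mu i.succ)) := rfl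
    rw [show (sp (pairH (r + 1) mu)).det = (sp (dsum (H2 (mu 0)) (pairH r (fun i => mu i.succ)))).det from rfl,
      det_sp_dsum, det_sp_pairH r, Fin.prod_univ_succ]

lemma det_sp_H2 {μ : ℂ} (hμ : (starRingEnd ℂ) μ ≠ 0) :
    (sp (H2 μ)).det = Polynomial.C (-((starRingEnd ℂ) μ)) *
      ((Polynomial.X - Polynomial.C (-μ)) *
        (Polynomial.X - Polynomial.C (-((starRingEnd ℂ) μ)⁻¹))) := by
  set u := (starRingEnd ℂ) μ with hu
  have hsp : sp (H2 μ) = !![0, Polynomial.C 1 + Polynomial.X * Polynomial.C u;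
      Polynomial.C μ + Polynomial.X, 0] := by
    unfold sp H2
    ext i j
    fin_cases i <;> fin_cases j <;>
      simp [Matrix.conjTranspose_apply, Matrix.map_apply, hu]
  rw [hsp, Matrix.det_fin_two_of]
  simp only [map_neg, map_inv₀, Polynomial.C_1]
  have h1 : Polynomial.C u * Polynomial.C u⁻¹ = 1 := by
    rw [← Polynomial.C_mul, mul_inv_cancel₀ hμ, Polynomial.C_1]
  linear_combination (Polynomial.X + Polynomial.C μ) * h1

lemma finSize_two (r : ℕ) : finSize (fun _ : Fin r => 2) = r + r := by
  induction r with
  | zero => rfl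
  | succ k ih =>
    show 2 + finSize (fun _ : Fin k => 2) = _
    rw [ih]; omega

lemma diag_factor {a : ℂ} (ha : ‖a‖ = 1) :
    Polynomial.C a + Polynomial.X * Polynomial.C ((starRingEnd ℂ) a) =
      Polynomial.C ((starRingEnd ℂ) a) * (Polynomial.X - Polynomial.C (-(a ^ 2))) := by
  have h : (starRingEnd ℂ) a * a = 1 := by
    rw [mul_comm, Complex.mul_conj, Complex.normSq_eq_norm_sq, ha]
    norm_num
  have hC : Polynomial.C ((starRingEnd ℂ) a) * Polynomial.C a = 1 := by
    rw [← Polynomial.C_mul, h, Polynomial.C_1]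
  simp only [map_neg, map_pow]
  linear_combination (-(Polynomial.C a)) * hC

lemma det_sp_diagonal {ι : Type*} [Fintype ι] [DecidableEq ι] (a : ι → ℂ)
    (ha : ∀ j, ‖a j‖ = 1) :
    (sp (Matrix.diagonal a)).det =
      Polynomial.C (∏ j, (starRingEnd ℂ) (a j)) * ∏ j, (Polynomial.X - Polynomial.C (-(a j ^ 2))) := by
  rw [sp_diagonal, Matrix.det_diagonal]
  rw [show (∏ j, (Polynomial.C (a j) + Polynomial.X * Polynomial.C ((starRingEnd ℂ) (a j)))) =
    ∏ j, (Polynomial.C ((starRingEnd ℂ) (a j)) * (Polynomial.X - Polynomial.C (-(a j ^ 2)))) from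
    Finset.prod_congr rfl fun j _ => diag_factor (ha j)]
  rw [Finset.prod_mul_distrib, map_prod]

lemma conj_ne_zero' {x : ℂ} (hx : x ≠ 0) : (starRingEnd ℂ) x ≠ 0 := by
  intro h0
  apply hx
  have := congrArg (starRingEnd ℂ) h0
  simpa using this

lemma bundle_factor {n ℓ : ℕ} {B : Matrix (Fin n) (Fin n) ℂ}
    (h : finSize (fun _ : Fin ℓ => 2) + (n - 2 * ℓ) = n)
    (mu : Fin ℓ → ℂ) (a : Fin (n - 2 * ℓ) → ℂ) (P : Matrix (Fin n) (Fin n) ℂ)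
    (hP : IsUnit P) (hmu : ∀ i, 1 < ‖mu i‖) (ha : ∀ j, ‖a j‖ = 1)
    (hB : B = P * Matrix.reindex (finCongr h) (finCongr h)
      (dsum (pairH ℓ mu) (Matrix.diagonal a)) * Pᴴ) :
    ∃ (c : ℂ) (w : Fin n → ℂ), c ≠ 0 ∧
      (∀ j : Fin n, (j : ℕ) < n - 2 * ℓ → ‖w j‖ = 1) ∧
      (sp B).det = Polynomial.C c * ∏ j, (Polynomial.X - Polynomial.C (w j)) := by
  have hmu0 : ∀ i, (starRingEnd ℂ) (mu i) ≠ 0 := by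
    intro i
    apply conj_ne_zero'
    intro h0
    have := hmu i
    rw [h0, norm_zero] at this
    linarith
  have hPdet : P.det ≠ 0 := (Matrix.isUnit_iff_isUnit_det P).mp hP |>.ne_zero
  have ha0 : ∀ j, a j ≠ 0 := by
    intro j h0
    have := ha j
    rw [h0] at this
    simp at this
  -- the constant
  set cH : ℂ := ∏ i, -((starRingEnd ℂ) (mu i)) with hcH
  set cD : ℂ := ∏ j, (starRingEnd ℂ) (a j) with hcD
  set c : ℂ := P.det * (starRingEnd ℂ) P.det * (cH * cD) with hc
  have hc0 : c ≠ 0 := by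
    apply mul_ne_zero (mul_ne_zero hPdet (conj_ne_zero' hPdet))
    apply mul_ne_zero
    · exact Finset.prod_ne_zero_iff.mpr fun i _ => neg_ne_zero.mpr (hmu0 i)
    · exact Finset.prod_ne_zero_iff.mpr fun j _ => conj_ne_zero' (ha0 j)
  -- sizes
  have hfs : finSize (fun _ : Fin ℓ => 2) = ℓ + ℓ := finSize_two ℓ
  have h2 : (n - 2 * ℓ) + (ℓ + ℓ) = n := by omega
  -- roots
  set w0 : Fin ((n - 2 * ℓ) + (ℓ + ℓ)) → ℂ :=
    Fin.append (fun j : Fin (n - 2 * ℓ) => -(a j ^ 2))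
      (Fin.append (fun i : Fin ℓ => -(mu i)) fun i : Fin ℓ => -(((starRingEnd ℂ) (mu i))⁻¹))
    with hw0
  set w : Fin n → ℂ := fun j => w0 ((finCongr h2).symm j) with hw
  refine ⟨c, w, hc0, ?_, ?_⟩
  · intro j hj
    have hcast : (finCongr h2).symm j = Fin.castAdd (ℓ + ℓ) ⟨(j : ℕ), hj⟩ := by
      apply Fin.ext
      simp
    show ‖w0 ((finCongr h2).symm j)‖ = 1
    rw [hcast, hw0, Fin.append_left]
    rw [norm_neg, norm_pow, ha]
    norm_num
  -- the factorization
  have hdet : (sp B).det =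
      Polynomial.C c *
        ((∏ j, (Polynomial.X - Polynomial.C (-(a j ^ 2)))) *
          ((∏ i, (Polynomial.X - Polynomial.C (-(mu i)))) *
            ∏ i, (Polynomial.X - Polynomial.C (-(((starRingEnd ℂ) (mu i))⁻¹))))) := by
    have hdm : ∀ Q : Matrix (Fin n) (Fin n) ℂ,
        (Q.map (Polynomial.C : ℂ → Polynomial ℂ)).det = Polynomial.C Q.det := by
      intro Q
      rw [show Q.map (Polynomial.C : ℂ → Polynomial ℂ)
          = (Polynomial.C : ℂ →+* Polynomial ℂ).mapMatrix Q from rfl,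
        ← RingHom.map_det]
    rw [hB, sp_congruence, Matrix.det_mul, Matrix.det_mul]
    rw [hdm, hdm]
    rw [Matrix.det_conjTranspose]
    rw [Matrix.reindex_apply, sp_submatrix, Matrix.det_submatrix_equiv_self]
    rw [det_sp_dsum, det_sp_pairH, det_sp_diagonal a ha]
    rw [Finset.prod_congr rfl fun i (_ : i ∈ Finset.univ) => det_sp_H2 (hmu0 i)]
    rw [Finset.prod_mul_distrib, Finset.prod_mul_distrib]
    rw [← map_prod (Polynomial.C : ℂ →+* Polynomial ℂ) (fun i => -((starRingEnd ℂ) (mu i)))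
      Finset.univ]
    rw [hc, hcH, hcD, Polynomial.C_mul, Polynomial.C_mul, Polynomial.C_mul, Complex.star_def]
    ring
  rw [hdet]
  congr 1
  -- product reindexing
  rw [← Fintype.prod_equiv (finCongr h2) (fun j => Polynomial.X - Polynomial.C (w0 j))
      (fun j => Polynomial.X - Polynomial.C (w j))
      (fun x => by rw [hw]; simp)]
  rw [Fin.prod_univ_add]
  congr 1
  · exact Finset.prod_congr rfl fun j _ => by rw [hw0, Fin.append_left]
  · rw [Fin.prod_univ_add]
    congr 1
    · exact Finset.prod_congr rfl fun i _ => by rw [hw0, Fin.append_right, Fin.append_left]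
    · exact Finset.prod_congr rfl fun i _ => by rw [hw0, Fin.append_right, Fin.append_right]

lemma sp_entry {n : ℕ} (A : Matrix (Fin n) (Fin n) ℂ) (i j : Fin n) :
    sp A i j = Polynomial.C (A i j) + Polynomial.X * Polynomial.C (Aᴴ i j) := by
  simp [sp, Matrix.map_apply]

lemma natDegree_sp_entry_le {n : ℕ} (A : Matrix (Fin n) (Fin n) ℂ) (i j : Fin n) :
    (sp A i j).natDegree ≤ 1 := by
  rw [sp_entry]
  refine le_trans (Polynomial.natDegree_add_le _ _) ?_
  simp only [Polynomial.natDegree_C, max_le_iff]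
  refine ⟨Nat.zero_le _, le_trans (Polynomial.natDegree_mul_le) ?_⟩
  simp

lemma natDegree_det_sp_le {n : ℕ} (A : Matrix (Fin n) (Fin n) ℂ) :
    ((sp A).det).natDegree ≤ n := by
  rw [Matrix.det_apply']
  refine Polynomial.natDegree_sum_le_of_forall_le _ _ fun σ _ => ?_
  refine le_trans (Polynomial.natDegree_mul_le) ?_
  rw [Polynomial.natDegree_intCast, zero_add]
  refine le_trans (Polynomial.natDegree_prod_le _ _) ?_
  calc ∑ i : Fin n, (sp A (σ i) i).natDegree ≤ ∑ _i : Fin n, 1 :=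
        Finset.sum_le_sum fun i _ => natDegree_sp_entry_le A (σ i) i
    _ = n := by simp

lemma coeff_det_sp {n : ℕ} (A : Matrix (Fin n) (Fin n) ℂ) :
    ((sp A).det).coeff n = Aᴴ.det := by
  rw [Matrix.det_apply', Matrix.det_apply' (M := Aᴴ)]
  rw [Polynomial.finset_sum_coeff]
  refine Finset.sum_congr rfl fun σ _ => ?_
  have hcast : ((Equiv.Perm.sign σ : ℤ) : Polynomial ℂ)
      = Polynomial.C ((Equiv.Perm.sign σ : ℤ) : ℂ) := by
    rw [Polynomial.C_eq_intCast]
  rw [hcast, Polynomial.coeff_C_mul]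
  congr 1
  have hcp := Polynomial.coeff_prod_of_natDegree_le (s := Finset.univ)
    (fun i => sp A (σ i) i) 1 (fun i _ => natDegree_sp_entry_le A (σ i) i)
  rw [show ((Finset.univ : Finset (Fin n)).card * 1) = n by simp] at hcp
  rw [hcp]
  refine Finset.prod_congr rfl fun i _ => ?_
  show (sp A (σ i) i).coeff 1 = _
  rw [sp_entry]
  simp [Polynomial.coeff_add, Polynomial.coeff_C, Polynomial.coeff_X_mul]

lemma eval_det_sp {n : ℕ} (A : Matrix (Fin n) (Fin n) ℂ) (z : ℂ) :
    ((sp A).det).eval z = (A + z • Aᴴ).det := by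
  have h : ((sp A).map (Polynomial.eval z)) = A + z • Aᴴ := by
    ext i j
    rw [Matrix.map_apply, sp_entry]
    simp only [Polynomial.eval_add, Polynomial.eval_C, Polynomial.eval_mul, Polynomial.eval_X,
      Matrix.add_apply, Matrix.smul_apply, smul_eq_mul]
  rw [← h]
  have := RingHom.map_det (Polynomial.evalRingHom z) (sp A)
  rw [show (Polynomial.evalRingHom z).mapMatrix (sp A)
      = (sp A).map (Polynomial.eval z) from rfl] at this
  exact this

lemma coeff_C_mul_prod {n : ℕ} (c : ℂ) (w : Fin n → ℂ) :
    (Polynomial.C c * ∏ j, (Polynomial.X - Polynomial.C (w j))).coeff n = c := by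
  set p := ∏ j, (Polynomial.X - Polynomial.C (w j)) with hp
  have hmon : p.Monic :=
    Polynomial.monic_prod_of_monic _ _ fun j _ => Polynomial.monic_X_sub_C (w j)
  have hdeg : p.natDegree = n := by
    rw [hp, Polynomial.natDegree_prod_of_monic _ _ fun j _ => Polynomial.monic_X_sub_C (w j)]
    simp
  rw [Polynomial.coeff_C_mul, ← hdeg, Polynomial.coeff_natDegree, hmon.leadingCoeff, mul_one]

set_option maxHeartbeats 1600000 in
open Classical in
/-- **Lemma 3.9.**  If `A` is invertible and belongs to the closure of the *congruence
bundle `ℬ*(H_2(μ_1) ⊕ ⋯ ⊕ H_2(μ_ℓ) ⊕ diag(α_1, …, α_{n-2ℓ}))`, then the polynomial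
`det(A + λ Aᴴ)` has at least `n - 2ℓ` roots of modulus `1`, counted with
multiplicity. -/
theorem card_unit_roots_ge_of_mem_closure_starBundle (n ℓ : ℕ) (hℓ : ℓ ≤ n / 2)
    (A : Matrix (Fin n) (Fin n) ℂ) (hA : IsUnit A)
    (μ : Fin ℓ → ℂ) (hμ : ∀ i, 1 < ‖μ i‖)
    (α : Fin (n - 2 * ℓ) → ℂ) (hα : ∀ j, ‖α j‖ = 1)
    (hcl : A ∈ closure {B : Matrix (Fin n) (Fin n) ℂ |
      ∃ (h : finSize (fun _ : Fin ℓ => 2) + (n - 2 * ℓ) = n)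
        (mu : Fin ℓ → ℂ) (a : Fin (n - 2 * ℓ) → ℂ)
        (P : Matrix (Fin n) (Fin n) ℂ),
        IsUnit P ∧ (∀ i, 1 < ‖mu i‖) ∧ (∀ j, ‖a j‖ = 1) ∧
        (∀ i i', mu i ≠ mu i' ↔ μ i ≠ μ i') ∧
        (∀ j j', a j ^ 2 ≠ a j' ^ 2 ↔ α j ^ 2 ≠ α j' ^ 2) ∧
        B = P * Matrix.reindex (finCongr h) (finCongr h)
              (dsum (pairH ℓ mu) (Matrix.diagonal a)) * Pᴴ}) :
    (n - 2 * ℓ : ℕ) ≤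
      Multiset.card
        ((starPencil A).det.roots.filter fun z => ‖z‖ = 1) := by
  classical
  have hdetA : A.det ≠ 0 := ((Matrix.isUnit_iff_isUnit_det A).mp hA).ne_zero
  set q : Polynomial ℂ := (starPencil A).det with hqdef
  have hqsp : q = (sp A).det := rfl
  -- extract an approximating sequence
  haveI : FirstCountableTopology (Matrix (Fin n) (Fin n) ℂ) :=
    inferInstanceAs (FirstCountableTopology (Fin n → Fin n → ℂ))
  haveI : FrechetUrysohnSpace (Matrix (Fin n) (Fin n) ℂ) :=
    FirstCountableTopology.frechetUrysohnSpace
  obtain ⟨Bs, hBmem, hBlim⟩ := mem_closure_iff_seq_limit.mp hcl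
  -- factor each element of the sequence
  have hfac : ∀ k, ∃ (c : ℂ) (w : Fin n → ℂ), c ≠ 0 ∧
      (∀ j : Fin n, (j : ℕ) < n - 2 * ℓ → ‖w j‖ = 1) ∧
      (sp (Bs k)).det = Polynomial.C c * ∏ j, (Polynomial.X - Polynomial.C (w j)) := by
    intro k
    obtain ⟨h, mu, a, P, hP, hmu, ha, -, -, hBeq⟩ := hBmem k
    exact bundle_factor h mu a P hP hmu ha hBeq
  choose cs ws hcs hws hfacs using hfac
  -- pointwise convergence of the determinant polynomials
  have hev : ∀ z : ℂ, Tendsto (fun k => ((sp (Bs k)).det).eval z) atTop (nhds (q.eval z)) := by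
    intro z
    have hcont : Continuous fun M : Matrix (Fin n) (Fin n) ℂ => (M + z • Mᴴ).det :=
      Continuous.matrix_det (A := fun M : Matrix (Fin n) (Fin n) ℂ => M + z • Mᴴ)
        (continuous_id.add (continuous_id.matrix_conjTranspose.const_smul z))
    have ht := (hcont.tendsto A).comp hBlim
    have he1 : (fun k => ((sp (Bs k)).det).eval z)
        = fun k => ((Bs k) + z • (Bs k)ᴴ).det := funext fun k => eval_det_sp (Bs k) z
    rw [he1, hqsp, eval_det_sp]
    exact ht
  -- coefficient convergence
  have hq_deg : q.natDegree ≤ n := natDegree_det_sp_le A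
  have hqs_deg : ∀ k, ((sp (Bs k)).det).natDegree ≤ n := fun k => natDegree_det_sp_le (Bs k)
  have hcoeff : ∀ m, Tendsto (fun k => ((sp (Bs k)).det).coeff m) atTop (nhds (q.coeff m)) :=
    coeff_tendsto_of_eval_tendsto hqs_deg hq_deg hev
  -- the leading coefficient
  have hlead0 : q.coeff n ≠ 0 := by
    rw [hqsp, coeff_det_sp, Matrix.det_conjTranspose]
    intro h0
    exact hdetA (by simpa using congrArg star h0)
  have hcs_eq : ∀ k, ((sp (Bs k)).det).coeff n = cs k := fun k => by
    rw [hfacs k]; exact coeff_C_mul_prod _ _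
  have hc_t : Tendsto cs atTop (nhds (q.coeff n)) := by
    have := hcoeff n
    simpa only [hcs_eq] using this
  -- eventual bounds on the roots
  set S : ℝ := ∑ m ∈ Finset.range n, ‖q.coeff m‖ with hSdef
  have habs_t : Tendsto (fun k => ‖cs k‖) atTop (nhds (‖q.coeff n‖)) :=
    (continuous_norm.tendsto _).comp hc_t
  have hpos : 0 < ‖q.coeff n‖ := norm_pos_iff.mpr hlead0
  have hev1 : ∀ᶠ k in atTop, ‖q.coeff n‖ / 2 < ‖cs k‖ :=
    habs_t.eventually (eventually_gt_nhds (by linarith))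
  have hsum_t : Tendsto (fun k => ∑ m ∈ Finset.range n, ‖((sp (Bs k)).det).coeff m‖)
      atTop (nhds S) :=
    tendsto_finset_sum _ fun m _ => (continuous_norm.tendsto _).comp (hcoeff m)
  have hev2 : ∀ᶠ k in atTop,
      ∑ m ∈ Finset.range n, ‖((sp (Bs k)).det).coeff m‖ ≤ S + 1 :=
    hsum_t.eventually (eventually_le_nhds (by linarith))
  have hS0 : 0 ≤ S := Finset.sum_nonneg fun m _ => norm_nonneg _
  set R : ℝ := max 1 ((S + 1) / (‖q.coeff n‖ / 2)) with hRdef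
  have hev3 : ∀ᶠ k in atTop, ∀ j, ‖ws k j‖ ≤ R := by
    filter_upwards [hev1, hev2] with k h1 h2 j
    have hroot : ((sp (Bs k)).det).eval (ws k j) = 0 := by
      rw [hfacs k, Polynomial.eval_mul]
      apply mul_eq_zero_of_right
      rw [Polynomial.eval_prod]
      exact Finset.prod_eq_zero (Finset.mem_univ j) (by simp)
    have hcsk : ((sp (Bs k)).det).coeff n ≠ 0 := by rw [hcs_eq k]; exact hcs k
    refine le_trans (root_bound (hqs_deg k) hcsk hroot) ?_
    refine max_le_max (le_refl 1) ?_
    rw [hcs_eq k]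
    exact div_le_div₀ (by linarith) h2 (by linarith) h1.le
  obtain ⟨k0, hk0⟩ := eventually_atTop.mp hev3
  have hR1 : (1 : ℝ) ≤ R := le_max_left _ _
  have hball : ∀ k, ws (k + k0) ∈ Metric.closedBall (0 : Fin n → ℂ) R := by
    intro k
    rw [Metric.mem_closedBall, dist_zero_right]
    rw [pi_norm_le_iff_of_nonneg (by linarith)]
    intro j
    exact hk0 (k + k0) (Nat.le_add_left _ _) j
  obtain ⟨wl, -, φ, hφ, hconv⟩ :=
    tendsto_subseq_of_bounded Metric.isBounded_closedBall hball
  have hcoord : ∀ j, Tendsto (fun k => ws (φ k + k0) j) atTop (nhds (wl j)) := fun j =>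
    ((continuous_apply j).tendsto wl).comp hconv
  have hφt : Tendsto (fun k => φ k + k0) atTop atTop :=
    tendsto_atTop_mono (fun k => Nat.le_add_right (φ k) k0) hφ.tendsto_atTop
  have hc_sub : Tendsto (fun k => cs (φ k + k0)) atTop (nhds (q.coeff n)) := hc_t.comp hφt
  -- the limit roots with small index are on the unit circle
  have hwl_circ : ∀ j : Fin n, (j : ℕ) < n - 2 * ℓ → ‖wl j‖ = 1 := by
    intro j hj
    have h1 : Tendsto (fun k => ‖ws (φ k + k0) j‖) atTop
        (nhds (‖wl j‖)) := (continuous_norm.tendsto _).comp (hcoord j)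
    have h2 : (fun k => ‖ws (φ k + k0) j‖) = fun _ => (1 : ℝ) :=
      funext fun k => hws _ j hj
    rw [h2] at h1
    exact tendsto_nhds_unique h1 tendsto_const_nhds
  -- identify the limit polynomial
  have hqfac : q = Polynomial.C (q.coeff n) * ∏ j, (Polynomial.X - Polynomial.C (wl j)) := by
    apply Polynomial.funext
    intro z
    have hA1 : Tendsto (fun k => ((sp (Bs (φ k + k0))).det).eval z) atTop (nhds (q.eval z)) :=
      (hev z).comp hφt
    have heq : ∀ k, ((sp (Bs (φ k + k0))).det).eval z
        = cs (φ k + k0) * ∏ j, (z - ws (φ k + k0) j) := by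
      intro k
      rw [hfacs]
      simp [Polynomial.eval_prod]
    have hB1 : Tendsto (fun k => ((sp (Bs (φ k + k0))).det).eval z) atTop
        (nhds (q.coeff n * ∏ j, (z - wl j))) := by
      rw [funext heq]
      exact hc_sub.mul (tendsto_finset_prod _ fun j _ => tendsto_const_nhds.sub (hcoord j))
    have := tendsto_nhds_unique hA1 hB1
    rw [this]
    simp [Polynomial.eval_prod]
  -- compute the roots of q
  have hroots : q.roots = Finset.univ.val.map wl := by
    rw [hqfac, Polynomial.roots_C_mul _ hlead0]
    have hps : (∏ j, (Polynomial.X - Polynomial.C (wl j)))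
        = ((Finset.univ.val.map wl).map fun z => Polynomial.X - Polynomial.C z).prod := by
      rw [Multiset.map_map]
      rfl
    rw [hps, Polynomial.roots_multiset_prod_X_sub_C]
  -- count the roots on the unit circle
  rw [hroots, Multiset.filter_map, Multiset.card_map]
  have hfval : (Multiset.filter ((fun z => ‖z‖ = 1) ∘ wl) Finset.univ.val)
      = (Finset.filter (fun j => ‖wl j‖ = 1) Finset.univ).val := by
    rw [Finset.filter_val]
    rfl
  rw [hfval]
  have hcard : Multiset.card (Finset.filter (fun j => ‖wl j‖ = 1) Finset.univ).val
      = (Finset.filter (fun j => ‖wl j‖ = 1) Finset.univ).card := rfl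
  rw [hcard]
  have hle : n - 2 * ℓ ≤ n := Nat.sub_le n (2 * ℓ)
  calc n - 2 * ℓ = (Finset.univ : Finset (Fin (n - 2 * ℓ))).card := by simp
    _ ≤ (Finset.filter (fun j => ‖wl j‖ = 1) Finset.univ).card :=
        Finset.card_le_card_of_injOn (fun i => Fin.castLE hle i)
          (fun i _ => Finset.mem_filter.mpr
            ⟨Finset.mem_univ _, hwl_circ _ (by simpa using i.isLt)⟩)
          ((Fin.castLE_injective hle).injOn)
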